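/- arXiv:1608.06269 — 4 statements merged into one kernel-verified Lean document; each statement's English description precedes it below -/
import Mathlib

section
/- Let X be a compact metric space and f : X → X continuous. If the induced map f̄ on K(X) is densely chaotic (the set of Li–Yorke pairs of f̄ is dense in K(X) × K(X)), then the set of distal pairs of f is a first category (meagre) subset of X × X. -/
open Filter Metric TopologicalSpace

/-- The induced map on the hyperspace of nonempty compact subsets. -/
noncomputable def inducedMap {X : Type*} [MetricSpace X] (f : X → X) (hf : Continuous f) :
    NonemptyCompacts X → NonemptyCompacts X :=
  fun K => ⟨⟨f '' K, K.isCompact.image hf⟩, K.nonempty.image f⟩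

lemma inducedMap_iterate_coe {X : Type*} [MetricSpace X] (f : X → X) (hf : Continuous f)
    (K : NonemptyCompacts X) (n : ℕ) :
    ((inducedMap f hf)^[n] K : Set X) = f^[n] '' (K : Set X) := by
  induction n with
  | zero => simp
  | succ n ih =>
    rw [Function.iterate_succ_apply', Function.iterate_succ']
    show f '' ((inducedMap f hf)^[n] K : Set X) = _
    rw [ih, Set.image_comp]

/-- If the induced map `f̄` on the hyperspace `K(X)` is densely chaotic (its set of
Li–Yorke pairs is dense in `K(X) × K(X)`), then the set of distal pairs of `f`
is meagre (of first category) in `X × X`. -/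
theorem distal_meagre_of_denselyChaotic_induced {X : Type*} [MetricSpace X] [CompactSpace X]
    (f : X → X) (hf : Continuous f)
    (hdense : Dense {p : NonemptyCompacts X × NonemptyCompacts X |
      liminf (fun n => dist ((inducedMap f hf)^[n] p.1) ((inducedMap f hf)^[n] p.2)) atTop = 0 ∧
      0 < limsup (fun n => dist ((inducedMap f hf)^[n] p.1) ((inducedMap f hf)^[n] p.2)) atTop}) :
    IsMeagre {p : X × X |
      0 < liminf (fun n => dist (f^[n] p.1) (f^[n] p.2)) atTop} := by
  -- the closed sets E k N
  set E : ℕ → ℕ → Set (X × X) := fun k N =>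
    {p : X × X | ∀ n, N ≤ n → 1 / (k + 1 : ℝ) ≤ dist (f^[n] p.1) (f^[n] p.2)} with hE
  have hclosed : ∀ k N, IsClosed (E k N) := by
    intro k N
    have : E k N = ⋂ (n : ℕ) (_ : N ≤ n),
        {p : X × X | 1 / (k + 1 : ℝ) ≤ dist (f^[n] p.1) (f^[n] p.2)} := by
      ext p; simp [hE]
    rw [this]
    refine isClosed_iInter fun n => isClosed_iInter fun _ => ?_
    exact isClosed_le continuous_const
      (((hf.iterate n).comp continuous_fst).dist ((hf.iterate n).comp continuous_snd))
  -- each E k N has empty interior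
  have hint : ∀ k N, interior (E k N) = ∅ := by
    intro k N
    by_contra h
    obtain ⟨p, hp⟩ := Set.nonempty_iff_ne_empty.2 h
    obtain ⟨r, hr, hball⟩ := Metric.isOpen_iff.1 isOpen_interior p hp
    have hball' : Metric.ball p r ⊆ E k N := hball.trans interior_subset
    -- the pair of singletons
    set P : NonemptyCompacts X × NonemptyCompacts X :=
      (⟨⟨{p.1}, isCompact_singleton⟩, Set.singleton_nonempty _⟩,
       ⟨⟨{p.2}, isCompact_singleton⟩, Set.singleton_nonempty _⟩) with hP
    obtain ⟨Q, hQmem, hQdist⟩ := Metric.mem_closure_iff.1 (hdense P) r hr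
    obtain ⟨hlim, -⟩ := hQmem
    set δ : ℝ := 1 / (k + 1 : ℝ) with hδ
    have hδpos : 0 < δ := by positivity
    -- from liminf = 0, frequently the distance is < δ
    have hcob : IsCoboundedUnder (· ≥ ·) atTop
        (fun n => dist ((inducedMap f hf)^[n] Q.1) ((inducedMap f hf)^[n] Q.2)) :=
      isCoboundedUnder_ge_of_le _ (x := Metric.diam (Set.univ : Set (NonemptyCompacts X)))
        fun n => Metric.dist_le_diam_of_mem isCompact_univ.isBounded trivial trivial
    have hfreq : ∃ᶠ n in atTop,
        dist ((inducedMap f hf)^[n] Q.1) ((inducedMap f hf)^[n] Q.2) < δ :=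
      frequently_lt_of_liminf_lt hcob (by rw [hlim]; exact hδpos)
    obtain ⟨n, hnN, hn⟩ := (frequently_atTop.1 hfreq) N
    -- translate to Hausdorff distance on images
    rw [NonemptyCompacts.dist_eq, inducedMap_iterate_coe, inducedMap_iterate_coe] at hn
    -- Q.1 is within r of {p.1}: every point of Q.1 is in ball p.1 r, same for Q.2
    have hQ1 : ∀ a ∈ (Q.1 : Set X), dist a p.1 < r := by
      intro a ha
      have hd : dist P.1 Q.1 < r := by
        have h' := hQdist
        rw [Prod.dist_eq] at h'
        exact (le_max_left _ _).trans_lt h'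
      rw [NonemptyCompacts.dist_eq] at hd
      obtain ⟨b, hb, hab⟩ := Metric.exists_dist_lt_of_hausdorffDist_lt' ha hd
        (Metric.hausdorffEdist_ne_top_of_nonempty_of_bounded (Set.singleton_nonempty _)
          Q.1.nonempty isCompact_singleton.isBounded Q.1.isCompact.isBounded)
      obtain rfl : b = p.1 := hb
      rwa [dist_comm]
    have hQ2 : ∀ a ∈ (Q.2 : Set X), dist a p.2 < r := by
      intro a ha
      have hd : dist P.2 Q.2 < r := by
        have h' := hQdist
        rw [Prod.dist_eq] at h'
        exact (le_max_right _ _).trans_lt h'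
      rw [NonemptyCompacts.dist_eq] at hd
      obtain ⟨b, hb, hab⟩ := Metric.exists_dist_lt_of_hausdorffDist_lt' ha hd
        (Metric.hausdorffEdist_ne_top_of_nonempty_of_bounded (Set.singleton_nonempty _)
          Q.2.nonempty isCompact_singleton.isBounded Q.2.isCompact.isBounded)
      obtain rfl : b = p.2 := hb
      rwa [dist_comm]
    -- pick a point of Q.1 and a close point of Q.2 at time n
    obtain ⟨a, ha⟩ := Q.1.nonempty
    obtain ⟨b', hb', hab⟩ := Metric.exists_dist_lt_of_hausdorffDist_lt
      (Set.mem_image_of_mem _ ha) hn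
      (Metric.hausdorffEdist_ne_top_of_nonempty_of_bounded (Q.1.nonempty.image _)
        (Q.2.nonempty.image _) (Q.1.isCompact.image (hf.iterate n)).isBounded
        (Q.2.isCompact.image (hf.iterate n)).isBounded)
    obtain ⟨b, hb, rfl⟩ := hb'
    -- (a, b) ∈ ball p r ⊆ E k N, contradiction
    have hmem : (a, b) ∈ Metric.ball p r := by
      rw [Metric.mem_ball, Prod.dist_eq]
      exact max_lt (hQ1 a ha) (hQ2 b hb)
    exact absurd hab (not_lt.2 (hball' hmem n hnN))
  -- conclude meagreness
  have hsub : {p : X × X | 0 < liminf (fun n => dist (f^[n] p.1) (f^[n] p.2)) atTop} ⊆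
      ⋃ (k : ℕ) (N : ℕ), E k N := by
    intro p hp
    obtain ⟨k, hk⟩ := exists_nat_one_div_lt (ε := liminf
      (fun n => dist (f^[n] p.1) (f^[n] p.2)) atTop) hp
    have hev : ∀ᶠ n in atTop, 1 / (k + 1 : ℝ) < dist (f^[n] p.1) (f^[n] p.2) :=
      eventually_lt_of_lt_liminf hk
        (isBoundedUnder_of ⟨0, fun n => dist_nonneg⟩)
    obtain ⟨N, hN⟩ := eventually_atTop.1 hev
    exact Set.mem_iUnion.2 ⟨k, Set.mem_iUnion.2 ⟨N, fun n hn => (hN n hn).le⟩⟩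
  refine IsMeagre.mono hsub ?_
  refine isMeagre_iUnion fun k => isMeagre_iUnion fun N => ?_
  rw [isMeagre_iff_countable_union_isNowhereDense]
  exact ⟨{E k N}, by simpa using ((hclosed k N).isNowhereDense_iff).2 (hint k N),
    Set.countable_singleton _, by simp⟩
end

section
/- Let f be a continuous self-map of a compact metric space X, and g = f^k for some k ≥ 1. Then limsup_{n→∞} d(fⁿx, fⁿy) > 0 if and only if limsup_{n→∞} d(gⁿx, gⁿy) > 0; consequently C₂(f) = C₂(g) and the set of Li–Yorke pairs of f equals that of g. -/
open Filter Metric TopologicalSpace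

private lemma unif_key {X : Type*} [MetricSpace X] [CompactSpace X]
    (f : X → X) (hf : Continuous f) (k : ℕ) {ε : ℝ} (hε : 0 < ε) :
    ∃ δ > 0, ∀ s ≤ k, ∀ a b : X, dist a b < δ → dist (f^[s] a) (f^[s] b) < ε := by
  have H : ∀ s : Fin (k+1), ∃ δ > 0, ∀ a b : X,
      dist a b < δ → dist (f^[(s:ℕ)] a) (f^[(s:ℕ)] b) < ε := by
    intro s
    have hu := CompactSpace.uniformContinuous_of_continuous (hf.iterate (s:ℕ))
    rcases Metric.uniformContinuous_iff.mp hu ε hε with ⟨δ, hδ, h⟩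
    exact ⟨δ, hδ, fun a b hab => h hab⟩
  choose δ hδ hδ' using H
  refine ⟨Finset.univ.inf' Finset.univ_nonempty δ, ?_, ?_⟩
  · exact (Finset.lt_inf'_iff _).mpr fun s _ => hδ s
  · intro s hs a b hab
    have hle : Finset.univ.inf' Finset.univ_nonempty δ ≤ δ ⟨s, Nat.lt_succ_of_le hs⟩ :=
      Finset.inf'_le _ (Finset.mem_univ _)
    exact hδ' ⟨s, Nat.lt_succ_of_le hs⟩ a b (lt_of_lt_of_le hab hle)

private lemma limsup_pos_iff' (u : ℕ → ℝ) (h0 : ∀ n, 0 ≤ u n) (C : ℝ) (hC : ∀ n, u n ≤ C) :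
    0 < limsup u atTop ↔ ∃ ε > 0, ∃ᶠ n in atTop, ε ≤ u n := by
  have hbdd : IsBoundedUnder (· ≤ ·) atTop u := Filter.isBoundedUnder_of ⟨C, hC⟩
  have hcob : IsCoboundedUnder (· ≤ ·) atTop u :=
    (Filter.isBoundedUnder_of (r := (· ≥ ·)) ⟨0, h0⟩).isCoboundedUnder_le
  constructor
  · intro h
    refine ⟨limsup u atTop / 2, by linarith, ?_⟩
    have := frequently_lt_of_lt_limsup hcob (by linarith : limsup u atTop / 2 < limsup u atTop)
    exact this.mono fun n hn => le_of_lt hn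
  · rintro ⟨ε, hε, hfreq⟩
    exact lt_of_lt_of_le hε (le_limsup_of_frequently_le hfreq hbdd)

private lemma liminf_zero_iff' (u : ℕ → ℝ) (h0 : ∀ n, 0 ≤ u n) (C : ℝ) (hC : ∀ n, u n ≤ C) :
    liminf u atTop = 0 ↔ ∀ ε > 0, ∃ᶠ n in atTop, u n < ε := by
  have hbdd : IsBoundedUnder (· ≥ ·) atTop u := Filter.isBoundedUnder_of ⟨0, h0⟩
  have hcob : IsCoboundedUnder (· ≥ ·) atTop u :=
    (Filter.isBoundedUnder_of (r := (· ≤ ·)) ⟨C, hC⟩).isCoboundedUnder_ge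
  constructor
  · intro h ε hε
    exact frequently_lt_of_liminf_lt hcob (by rw [h]; exact hε)
  · intro h
    refine le_antisymm ?_ ?_
    · refine (le_iff_forall_pos_le_add).mpr fun ε hε => ?_
      have := liminf_le_of_frequently_le ((h ε hε).mono fun n hn => le_of_lt hn) hbdd
      linarith
    · exact le_liminf_of_le hcob (Filter.Eventually.of_forall h0)

/-- For a continuous self-map `f` of a compact metric space and `g = f^k` with `k ≥ 1`,
`limsup_n d(f^n x, f^n y) > 0` iff `limsup_n d(g^n x, g^n y) > 0`; consequently
`C₂(f) = C₂(g)` and the set of Li–Yorke pairs of `f` equals that of `g`. -/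
theorem limsup_pos_iterate_iff {X : Type*} [MetricSpace X] [CompactSpace X]
    (f : X → X) (hf : Continuous f) (k : ℕ) (hk : 1 ≤ k) :
    (∀ x y : X,
      0 < limsup (fun n => dist (f^[n] x) (f^[n] y)) atTop ↔
      0 < limsup (fun n => dist ((f^[k])^[n] x) ((f^[k])^[n] y)) atTop) ∧
    {p : X × X | 0 < limsup (fun n => dist (f^[n] p.1) (f^[n] p.2)) atTop} =
      {p : X × X | 0 < limsup (fun n => dist ((f^[k])^[n] p.1) ((f^[k])^[n] p.2)) atTop} ∧
    {p : X × X | liminf (fun n => dist (f^[n] p.1) (f^[n] p.2)) atTop = 0 ∧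
        0 < limsup (fun n => dist (f^[n] p.1) (f^[n] p.2)) atTop} =
      {p : X × X | liminf (fun n => dist ((f^[k])^[n] p.1) ((f^[k])^[n] p.2)) atTop = 0 ∧
        0 < limsup (fun n => dist ((f^[k])^[n] p.1) ((f^[k])^[n] p.2)) atTop} := by
  have hk0 : 0 < k := hk
  set C := Metric.diam (Set.univ : Set X) with hCdef
  have hCb : ∀ a b : X, dist a b ≤ C := fun a b =>
    Metric.dist_le_diam_of_mem isCompact_univ.isBounded (Set.mem_univ a) (Set.mem_univ b)
  -- key pointwise facts
  have hv : ∀ (x : X) (n : ℕ), (f^[k])^[n] x = f^[k*n] x := fun x n => by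
    rw [Function.iterate_mul]
  have P : ∀ x y : X,
      0 < limsup (fun n => dist (f^[n] x) (f^[n] y)) atTop ↔
      0 < limsup (fun n => dist ((f^[k])^[n] x) ((f^[k])^[n] y)) atTop := by
    intro x y
    set u : ℕ → ℝ := fun n => dist (f^[n] x) (f^[n] y) with hu
    set v : ℕ → ℝ := fun n => dist ((f^[k])^[n] x) ((f^[k])^[n] y) with hvv
    have hvu : ∀ n, v n = u (k*n) := fun n => by simp only [hu, hvv, hv]
    rw [limsup_pos_iff' u (fun n => dist_nonneg) C (fun n => hCb _ _),
        limsup_pos_iff' v (fun n => dist_nonneg) C (fun n => hCb _ _)]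
    constructor
    · rintro ⟨ε, hε, hfreq⟩
      obtain ⟨δ, hδ, hδ'⟩ := unif_key f hf k hε
      refine ⟨δ, hδ, ?_⟩
      rw [frequently_atTop] at hfreq ⊢
      intro N
      obtain ⟨m, hm, hum⟩ := hfreq (k*N)
      refine ⟨m / k, ?_, ?_⟩
      · show N ≤ m / k
        rw [Nat.le_div_iff_mul_le hk0, mul_comm]; exact hm
      · by_contra hlt
        push_neg at hlt
        have hmod : m % k ≤ k := le_of_lt (Nat.mod_lt m hk0)
        have hrw : ∀ z : X, f^[m] z = f^[m % k] ((f^[k])^[m/k] z) := by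
          intro z
          conv_lhs => rw [← Nat.mod_add_div m k]
          rw [Function.iterate_add_apply, hv]
        have := hδ' (m % k) hmod ((f^[k])^[m/k] x) ((f^[k])^[m/k] y) hlt
        rw [← hrw, ← hrw] at this
        exact absurd hum (not_le.mpr this)
    · rintro ⟨ε, hε, hfreq⟩
      refine ⟨ε, hε, ?_⟩
      rw [frequently_atTop] at hfreq ⊢
      intro N
      obtain ⟨m, hm, hvm⟩ := hfreq N
      refine ⟨k*m, le_trans hm (Nat.le_mul_of_pos_left m hk0), ?_⟩
      rw [← hvu]; exact hvm
  have Q : ∀ x y : X,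
      liminf (fun n => dist (f^[n] x) (f^[n] y)) atTop = 0 ↔
      liminf (fun n => dist ((f^[k])^[n] x) ((f^[k])^[n] y)) atTop = 0 := by
    intro x y
    set u : ℕ → ℝ := fun n => dist (f^[n] x) (f^[n] y) with hu
    set v : ℕ → ℝ := fun n => dist ((f^[k])^[n] x) ((f^[k])^[n] y) with hvv
    have hvu : ∀ n, v n = u (k*n) := fun n => by simp only [hu, hvv, hv]
    rw [liminf_zero_iff' u (fun n => dist_nonneg) C (fun n => hCb _ _),
        liminf_zero_iff' v (fun n => dist_nonneg) C (fun n => hCb _ _)]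
    constructor
    · intro h ε hε
      obtain ⟨δ, hδ, hδ'⟩ := unif_key f hf k hε
      have hfreq := h δ hδ
      rw [frequently_atTop] at hfreq ⊢
      intro N
      obtain ⟨m, hm, hum⟩ := hfreq (k*N)
      refine ⟨m / k + 1, ?_, ?_⟩
      · have : N ≤ m / k := by rw [Nat.le_div_iff_mul_le hk0, mul_comm]; exact hm
        omega
      · have hmod : k - m % k ≤ k := Nat.sub_le _ _
        have hsum : (k - m % k) + m = k * (m / k + 1) := by
          have h1 : m % k < k := Nat.mod_lt m hk0
          have h2 : m % k + k * (m / k) = m := Nat.mod_add_div m k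
          rw [Nat.mul_succ]
          omega
        have hrw : ∀ z : X, (f^[k])^[m/k + 1] z = f^[k - m % k] (f^[m] z) := by
          intro z
          rw [hv, ← hsum, Function.iterate_add_apply]
        have := hδ' (k - m % k) hmod (f^[m] x) (f^[m] y) hum
        rw [← hrw, ← hrw] at this
        exact this
    · intro h ε hε
      have hfreq := h ε hε
      rw [frequently_atTop] at hfreq ⊢
      intro N
      obtain ⟨m, hm, hvm⟩ := hfreq N
      refine ⟨k*m, le_trans hm (Nat.le_mul_of_pos_left m hk0), ?_⟩
      rw [hvu] at hvm; exact hvm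
  exact ⟨P, Set.ext fun p => P p.1 p.2, Set.ext fun p => and_congr (Q p.1 p.2) (P p.1 p.2)⟩
end

section
/- Let f : I → I be a continuous map on the unit interval I = [0,1], and suppose the induced map f̄ on K(I) is such that C₁(f̄) is residual in K(I) × K(I). Then C₁(f) is dense in I × I, i.e., for every pair of nondegenerate subintervals J₁, J₂ ⊆ I, liminf_{n→∞} dist(fⁿ(J₁), fⁿ(J₂)) = 0. -/
open Filter Metric TopologicalSpace

local notation "II" => Set.Icc (0:ℝ) 1

lemma aux_dist_le_one (p q : II) : dist p q ≤ 1 := by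
  rw [Subtype.dist_eq, Real.dist_eq]
  have h1 := p.2.1; have h2 := p.2.2; have h3 := q.2.1; have h4 := q.2.2
  rw [abs_le]; constructor <;> linarith

lemma aux_liminf_eq_zero (u : ℕ → ℝ) (h0 : ∀ n, 0 ≤ u n) (h1 : ∀ n, u n ≤ 1)
    (h : ∀ ε > 0, ∃ᶠ n in atTop, u n < ε) : liminf u atTop = 0 := by
  have hb : IsBoundedUnder (· ≥ ·) atTop u := isBoundedUnder_of ⟨0, fun n => h0 n⟩
  refine le_antisymm ?_ (le_liminf_of_le (isCoboundedUnder_ge_of_le _ h1) (.of_forall h0))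
  by_contra hlt
  push_neg at hlt
  have := liminf_le_of_frequently_le
    (((h _ (by linarith : (0:ℝ) < liminf u atTop / 2)).mono fun n hn => hn.le)) hb
  linarith

lemma aux_iter_image (f : II → II) (hf : Continuous f) (n : ℕ) (K : NonemptyCompacts II) :
    ((inducedMap f hf)^[n] K : Set II) = f^[n] '' K := by
  induction n with
  | zero => simp
  | succ n ih =>
    rw [Function.iterate_succ_apply']
    show f '' ((inducedMap f hf)^[n] K : Set II) = _
    rw [ih, ← Set.image_comp, ← Function.iterate_succ']

lemma aux_shrink (a b u : II) (hab : a < b) (hu : u ∈ Set.Icc a b) (r : ℝ) (hr : 0 < r) :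
    ∃ a' b' : II, a' < b' ∧ Set.Icc a' b' ⊆ Set.Icc a b ∧ u ∈ Set.Icc a' b' ∧
      ∀ x ∈ Set.Icc a' b', dist x u < r := by
  rcases lt_or_eq_of_le hu.2 with hub | hub
  · -- u < b
    have hub' : (u:ℝ) < b := hub
    have ht1 : (0:ℝ) ≤ min (b:ℝ) ((u:ℝ) + r/2) := le_min (b.2.1) (by have := u.2.1; linarith)
    have ht2 : min (b:ℝ) ((u:ℝ) + r/2) ≤ 1 := le_trans (min_le_left _ _) b.2.2
    refine ⟨u, ⟨min (b:ℝ) ((u:ℝ) + r/2), ht1, ht2⟩, ?_, ?_, ?_, ?_⟩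
    · exact Subtype.mk_lt_mk.2 (lt_min hub' (by linarith))
    · intro x hx
      exact ⟨le_trans hu.1 hx.1, le_trans hx.2 (Subtype.mk_le_mk.2 (min_le_left _ _))⟩
    · exact ⟨le_refl u, le_of_lt (Subtype.mk_lt_mk.2 (lt_min hub' (by linarith)))⟩
    · intro x hx
      have h1 : (u:ℝ) ≤ x := hx.1
      have h2 : (x:ℝ) ≤ min (b:ℝ) ((u:ℝ) + r/2) := hx.2
      have h3 : (x:ℝ) ≤ (u:ℝ) + r/2 := le_trans h2 (min_le_right _ _)
      rw [Subtype.dist_eq, Real.dist_eq, abs_lt]; constructor <;> linarith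
  · -- u = b, so a < u
    have hau : (a:ℝ) < u := by rw [hub]; exact hab
    have ht1 : (0:ℝ) ≤ max (a:ℝ) ((u:ℝ) - r/2) := le_trans a.2.1 (le_max_left _ _)
    have ht2 : max (a:ℝ) ((u:ℝ) - r/2) ≤ 1 :=
      max_le a.2.2 (by have := u.2.2; linarith)
    refine ⟨⟨max (a:ℝ) ((u:ℝ) - r/2), ht1, ht2⟩, u, ?_, ?_, ?_, ?_⟩
    · exact Subtype.mk_lt_mk.2 (max_lt hau (by linarith))
    · intro x hx
      exact ⟨le_trans (Subtype.mk_le_mk.2 (le_max_left _ _)) hx.1, le_trans hx.2 hu.2⟩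
    · exact ⟨le_of_lt (Subtype.mk_lt_mk.2 (max_lt hau (by linarith))), le_refl u⟩
    · intro x hx
      have h2 : max (a:ℝ) ((u:ℝ) - r/2) ≤ (x:ℝ) := hx.1
      have h3 : (u:ℝ) - r/2 ≤ (x:ℝ) := le_trans (le_max_right _ _) h2
      have h1 : (x:ℝ) ≤ u := hx.2
      rw [Subtype.dist_eq, Real.dist_eq, abs_lt]; constructor <;> linarith

lemma aux_interval (f : II → II) (hf : Continuous f)
    (hres : {p : NonemptyCompacts II × NonemptyCompacts II |
        liminf (fun n => dist ((inducedMap f hf)^[n] p.1) ((inducedMap f hf)^[n] p.2)) atTop = 0}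
      ∈ residual (NonemptyCompacts II × NonemptyCompacts II))
    (a b c d : II) (hab : a < b) (hcd : c < d) :
    liminf (fun n => sInf (Set.image2 dist (f^[n] '' Set.Icc a b) (f^[n] '' Set.Icc c d)))
      atTop = 0 := by
  have hdense := dense_of_mem_residual hres
  -- middle subintervals
  have hab' : (a:ℝ) < b := hab
  have hcd' : (c:ℝ) < d := hcd
  set m₁ : ℝ := ((b:ℝ) - a)/4 with hm₁
  set m₂ : ℝ := ((d:ℝ) - c)/4 with hm₂
  have hm₁0 : 0 < m₁ := by rw [hm₁]; linarith
  have hm₂0 : 0 < m₂ := by rw [hm₂]; linarith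
  have ha₁ : (a:ℝ) + m₁ ∈ Set.Icc (0:ℝ) 1 :=
    ⟨by have := a.2.1; linarith, by have := b.2.2; linarith⟩
  have hb₁ : (b:ℝ) - m₁ ∈ Set.Icc (0:ℝ) 1 :=
    ⟨by have := a.2.1; linarith, by have := b.2.2; linarith⟩
  have hc₁ : (c:ℝ) + m₂ ∈ Set.Icc (0:ℝ) 1 :=
    ⟨by have := c.2.1; linarith, by have := d.2.2; linarith⟩
  have hd₁ : (d:ℝ) - m₂ ∈ Set.Icc (0:ℝ) 1 :=
    ⟨by have := c.2.1; linarith, by have := d.2.2; linarith⟩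
  set a₁ : II := ⟨(a:ℝ) + m₁, ha₁⟩
  set b₁ : II := ⟨(b:ℝ) - m₁, hb₁⟩
  set c₁ : II := ⟨(c:ℝ) + m₂, hc₁⟩
  set d₁ : II := ⟨(d:ℝ) - m₂, hd₁⟩
  have hab₁ : a₁ ≤ b₁ := Subtype.mk_le_mk.2 (by linarith)
  have hcd₁ : c₁ ≤ d₁ := Subtype.mk_le_mk.2 (by linarith)
  set K₁ : NonemptyCompacts II := ⟨⟨Set.Icc a₁ b₁, isClosed_Icc.isCompact⟩,
    Set.nonempty_Icc.2 hab₁⟩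
  set K₂ : NonemptyCompacts II := ⟨⟨Set.Icc c₁ d₁, isClosed_Icc.isCompact⟩,
    Set.nonempty_Icc.2 hcd₁⟩
  -- find a pair in the residual set close to (K₁, K₂)
  have hm : (0:ℝ) < min m₁ m₂ := lt_min hm₁0 hm₂0
  obtain ⟨⟨L₁, L₂⟩, hLball, hLmem⟩ := (Metric.dense_iff.1 hdense) (K₁, K₂) _ hm
  rw [Metric.mem_ball, Prod.dist_eq] at hLball
  have hL₁ : dist L₁ K₁ < m₁ := lt_of_le_of_lt (le_max_left _ _)
    (lt_of_lt_of_le hLball (min_le_left _ _))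
  have hL₂ : dist L₂ K₂ < m₂ := lt_of_le_of_lt (le_max_right _ _)
    (lt_of_lt_of_le hLball (min_le_right _ _))
  -- L₁ ⊆ Icc a b, L₂ ⊆ Icc c d
  have hEne : ∀ (S T : NonemptyCompacts II), EMetric.hausdorffEdist (S : Set II) T ≠ ⊤ :=
    fun S T => Metric.hausdorffEdist_ne_top_of_nonempty_of_bounded S.nonempty T.nonempty
      S.isCompact.isBounded T.isCompact.isBounded
  have hsub₁ : (L₁ : Set II) ⊆ Set.Icc a b := by
    intro x hx
    rw [NonemptyCompacts.dist_eq] at hL₁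
    obtain ⟨y, hy, hxy⟩ := Metric.exists_dist_lt_of_hausdorffDist_lt hx hL₁ (hEne L₁ K₁)
    rw [Subtype.dist_eq, Real.dist_eq, abs_lt] at hxy
    have hy1 : (a:ℝ) + m₁ ≤ y := hy.1
    have hy2 : (y:ℝ) ≤ (b:ℝ) - m₁ := hy.2
    exact ⟨Subtype.coe_le_coe.1 (by linarith), Subtype.coe_le_coe.1 (by linarith)⟩
  have hsub₂ : (L₂ : Set II) ⊆ Set.Icc c d := by
    intro x hx
    rw [NonemptyCompacts.dist_eq] at hL₂
    obtain ⟨y, hy, hxy⟩ := Metric.exists_dist_lt_of_hausdorffDist_lt hx hL₂ (hEne L₂ K₂)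
    rw [Subtype.dist_eq, Real.dist_eq, abs_lt] at hxy
    have hy1 : (c:ℝ) + m₂ ≤ y := hy.1
    have hy2 : (y:ℝ) ≤ (d:ℝ) - m₂ := hy.2
    exact ⟨Subtype.coe_le_coe.1 (by linarith), Subtype.coe_le_coe.1 (by linarith)⟩
  -- the target sequence
  set v : ℕ → ℝ := fun n =>
    sInf (Set.image2 dist (f^[n] '' Set.Icc a b) (f^[n] '' Set.Icc c d)) with hv
  have hne : ∀ n, (Set.image2 dist (f^[n] '' Set.Icc a b) (f^[n] '' Set.Icc c d)).Nonempty :=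
    fun n => ((Set.nonempty_Icc.2 hab.le).image _).image2 ((Set.nonempty_Icc.2 hcd.le).image _)
  have hbdd : ∀ n, BddBelow (Set.image2 dist (f^[n] '' Set.Icc a b) (f^[n] '' Set.Icc c d)) :=
    fun n => ⟨0, by rintro z ⟨p, hp, q, hq, rfl⟩; exact dist_nonneg⟩
  have hv0 : ∀ n, 0 ≤ v n := fun n => le_csInf (hne n)
    (by rintro z ⟨p, hp, q, hq, rfl⟩; exact dist_nonneg)
  have hv1 : ∀ n, v n ≤ 1 := by
    intro n
    have h1 : a ∈ Set.Icc a b := Set.left_mem_Icc.2 hab.le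
    have h2 : c ∈ Set.Icc c d := Set.left_mem_Icc.2 hcd.le
    exact le_trans (csInf_le (hbdd n)
      (Set.mem_image2_of_mem (Set.mem_image_of_mem _ h1) (Set.mem_image_of_mem _ h2)))
      (aux_dist_le_one _ _)
  refine aux_liminf_eq_zero v hv0 hv1 ?_
  intro ε hε
  -- from hLmem : liminf of hyperspace distances is 0
  have hmem : liminf (fun n => dist ((inducedMap f hf)^[n] L₁) ((inducedMap f hf)^[n] L₂))
      atTop = 0 := hLmem
  have hcob : IsCoboundedUnder (· ≥ ·) atTop
      (fun n => dist ((inducedMap f hf)^[n] L₁) ((inducedMap f hf)^[n] L₂)) := by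
    refine isCoboundedUnder_ge_of_le _ (x := 1) fun n => ?_
    rw [NonemptyCompacts.dist_eq]
    refine le_trans (Metric.hausdorffDist_le_diam (NonemptyCompacts.nonempty _)
      (NonemptyCompacts.isCompact _).isBounded (NonemptyCompacts.nonempty _)
      (NonemptyCompacts.isCompact _).isBounded) ?_
    exact Metric.diam_le_of_forall_dist_le zero_le_one fun x _ y _ => aux_dist_le_one x y
  have hfreq : ∃ᶠ n in atTop,
      dist ((inducedMap f hf)^[n] L₁) ((inducedMap f hf)^[n] L₂) < ε :=
    frequently_lt_of_liminf_lt hcob (by rw [hmem]; exact hε)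
  refine hfreq.mono fun n hn => ?_
  rw [NonemptyCompacts.dist_eq, aux_iter_image, aux_iter_image] at hn
  obtain ⟨x, hxmem⟩ := L₁.nonempty.image (f^[n])
  have hEne' : EMetric.hausdorffEdist (f^[n] '' (L₁ : Set II)) (f^[n] '' (L₂ : Set II)) ≠ ⊤ :=
    Metric.hausdorffEdist_ne_top_of_nonempty_of_bounded (L₁.nonempty.image _)
      (L₂.nonempty.image _) (L₁.isCompact.image (hf.iterate n)).isBounded
      (L₂.isCompact.image (hf.iterate n)).isBounded
  obtain ⟨y, hy, hxy⟩ := Metric.exists_dist_lt_of_hausdorffDist_lt hxmem hn hEne'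
  calc v n ≤ dist x y := csInf_le (hbdd n)
        (Set.mem_image2_of_mem
          (Set.image_mono (f := f^[n]) hsub₁ hxmem) (Set.image_mono (f := f^[n]) hsub₂ hy))
    _ < ε := hxy

lemma aux_step (f : II → II) (hf : Continuous f)
    (hres : {p : NonemptyCompacts II × NonemptyCompacts II |
        liminf (fun n => dist ((inducedMap f hf)^[n] p.1) ((inducedMap f hf)^[n] p.2)) atTop = 0}
      ∈ residual (NonemptyCompacts II × NonemptyCompacts II))
    (a b c d : II) (hab : a < b) (hcd : c < d) (N : ℕ) (δ : ℝ) (hδ : 0 < δ) :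
    ∃ (a' b' c' d' : II) (n : ℕ), N < n ∧ a' < b' ∧ c' < d' ∧
      Set.Icc a' b' ⊆ Set.Icc a b ∧ Set.Icc c' d' ⊆ Set.Icc c d ∧
      ∀ u ∈ Set.Icc a' b', ∀ v ∈ Set.Icc c' d', dist (f^[n] u) (f^[n] v) < δ := by
  have hlim := aux_interval f hf hres a b c d hab hcd
  set w : ℕ → ℝ := fun n =>
    sInf (Set.image2 dist (f^[n] '' Set.Icc a b) (f^[n] '' Set.Icc c d)) with hw
  have hne : ∀ n, (Set.image2 dist (f^[n] '' Set.Icc a b) (f^[n] '' Set.Icc c d)).Nonempty :=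
    fun n => ((Set.nonempty_Icc.2 hab.le).image _).image2 ((Set.nonempty_Icc.2 hcd.le).image _)
  have hcob : IsCoboundedUnder (· ≥ ·) atTop w := by
    refine isCoboundedUnder_ge_of_le _ (x := 1) fun n => ?_
    refine le_trans (csInf_le ⟨0, ?_⟩ ?_) (aux_dist_le_one (f^[n] a) (f^[n] c))
    · rintro z ⟨p, hp, q, hq, rfl⟩; exact dist_nonneg
    · exact Set.mem_image2_of_mem (Set.mem_image_of_mem _ (Set.left_mem_Icc.2 hab.le))
        (Set.mem_image_of_mem _ (Set.left_mem_Icc.2 hcd.le))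
  have hfreq : ∃ᶠ n in atTop, w n < δ/3 :=
    frequently_lt_of_liminf_lt hcob (by rw [hlim]; linarith)
  obtain ⟨n, hn1, hn2⟩ := (hfreq.and_eventually (eventually_gt_atTop N)).exists
  obtain ⟨z, hz, hzlt⟩ := exists_lt_of_csInf_lt (hne n) hn1
  obtain ⟨p, hp, q, hq, rfl⟩ := hz
  obtain ⟨u₀, hu₀, rfl⟩ := hp
  obtain ⟨v₀, hv₀, rfl⟩ := hq
  -- continuity of f^[n] at u₀ and v₀
  obtain ⟨r₁, hr₁0, hr₁⟩ := (Metric.continuous_iff.1 (hf.iterate n)) u₀ (δ/3) (by linarith)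
  obtain ⟨r₂, hr₂0, hr₂⟩ := (Metric.continuous_iff.1 (hf.iterate n)) v₀ (δ/3) (by linarith)
  obtain ⟨a', b', hab', hsub1, _, hball1⟩ := aux_shrink a b u₀ hab hu₀ r₁ hr₁0
  obtain ⟨c', d', hcd', hsub2, _, hball2⟩ := aux_shrink c d v₀ hcd hv₀ r₂ hr₂0
  refine ⟨a', b', c', d', n, hn2, hab', hcd', hsub1, hsub2, fun u hu v hv => ?_⟩
  calc dist (f^[n] u) (f^[n] v)
      ≤ dist (f^[n] u) (f^[n] u₀) + dist (f^[n] u₀) (f^[n] v₀) + dist (f^[n] v₀) (f^[n] v) :=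
        dist_triangle4 _ _ _ _
    _ < δ/3 + δ/3 + δ/3 := by
        refine add_lt_add (add_lt_add (hr₁ u (hball1 u hu)) hzlt) ?_
        rw [dist_comm]; exact hr₂ v (hball2 v hv)
    _ = δ := by ring

structure AuxState where
  a : Set.Icc (0:ℝ) 1
  b : Set.Icc (0:ℝ) 1
  c : Set.Icc (0:ℝ) 1
  d : Set.Icc (0:ℝ) 1
  hab : a < b
  hcd : c < d
  n : ℕ

def auxGood (f : Set.Icc (0:ℝ) 1 → Set.Icc (0:ℝ) 1) (s t : AuxState) (k : ℕ) : Prop :=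
  s.n < t.n ∧ Set.Icc t.a t.b ⊆ Set.Icc s.a s.b ∧ Set.Icc t.c t.d ⊆ Set.Icc s.c s.d ∧
  ∀ u ∈ Set.Icc t.a t.b, ∀ v ∈ Set.Icc t.c t.d,
    dist (f^[t.n] u) (f^[t.n] v) < 1/(k+1)


/-- Let `f` be a continuous self-map of `I = [0,1]` and suppose `C₁(f̄)` is residual in
`K(I) × K(I)`. Then `C₁(f)` is dense in `I × I`; equivalently, for every pair of nondegenerate
compact subintervals `J₁ = [a,b]`, `J₂ = [c,d]` of `I`,
`liminf_n dist(fⁿ(J₁), fⁿ(J₂)) = 0`. -/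
theorem C1_dense_of_residual_induced
    (f : Set.Icc (0:ℝ) 1 → Set.Icc (0:ℝ) 1) (hf : Continuous f)
    (hres : {p : NonemptyCompacts (Set.Icc (0:ℝ) 1) × NonemptyCompacts (Set.Icc (0:ℝ) 1) |
        liminf (fun n => dist ((inducedMap f hf)^[n] p.1) ((inducedMap f hf)^[n] p.2)) atTop = 0}
      ∈ residual (NonemptyCompacts (Set.Icc (0:ℝ) 1) × NonemptyCompacts (Set.Icc (0:ℝ) 1))) :
    Dense {p : Set.Icc (0:ℝ) 1 × Set.Icc (0:ℝ) 1 |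
        liminf (fun n => dist (f^[n] p.1) (f^[n] p.2)) atTop = 0} ∧
    ∀ a b c d : Set.Icc (0:ℝ) 1, a < b → c < d →
      liminf (fun n => sInf (Set.image2 dist (f^[n] '' Set.Icc a b) (f^[n] '' Set.Icc c d)))
        atTop = 0 := by
  constructor
  · -- density of C₁(f)
    rw [Metric.dense_iff]
    rintro ⟨x, y⟩ r hr
    set z0 : II := ⟨0, le_refl _, zero_le_one⟩ with hz0
    set z1 : II := ⟨1, zero_le_one, le_refl _⟩ with hz1
    have h01 : z0 < z1 := Subtype.mk_lt_mk.2 zero_lt_one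
    have hxmem : x ∈ Set.Icc z0 z1 := ⟨Subtype.mk_le_mk.2 x.2.1, Subtype.mk_le_mk.2 x.2.2⟩
    have hymem : y ∈ Set.Icc z0 z1 := ⟨Subtype.mk_le_mk.2 y.2.1, Subtype.mk_le_mk.2 y.2.2⟩
    obtain ⟨a₀, b₀, hab₀, _, _, hball₁⟩ := aux_shrink z0 z1 x h01 hxmem r hr
    obtain ⟨c₀, d₀, hcd₀, _, _, hball₂⟩ := aux_shrink z0 z1 y h01 hymem r hr
    -- step existence
    have hstep : ∀ (s : AuxState) (k : ℕ), ∃ t : AuxState, auxGood f s t k := by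
      intro s k
      obtain ⟨a', b', c', d', n, h1, h2, h3, h4, h5, h6⟩ :=
        aux_step f hf hres s.a s.b s.c s.d s.hab s.hcd s.n (1/(k+1)) (by positivity)
      exact ⟨⟨a', b', c', d', h2, h3, n⟩, h1, h4, h5, h6⟩
    set s₀ : AuxState := ⟨a₀, b₀, c₀, d₀, hab₀, hcd₀, 0⟩ with hs₀
    let g : ℕ → AuxState := fun k => Nat.rec s₀ (fun k ih => Classical.choose (hstep ih k)) k
    have hg : ∀ k, auxGood f (g k) (g (k+1)) k := fun k => Classical.choose_spec (hstep (g k) k)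
    have hmono1 : ∀ k j, k ≤ j → Set.Icc (g j).a (g j).b ⊆ Set.Icc (g k).a (g k).b := by
      intro k j hkj
      induction j, hkj using Nat.le_induction with
      | base => exact subset_rfl
      | succ j hkj ih => exact subset_trans (hg j).2.1 ih
    have hmono2 : ∀ k j, k ≤ j → Set.Icc (g j).c (g j).d ⊆ Set.Icc (g k).c (g k).d := by
      intro k j hkj
      induction j, hkj using Nat.le_induction with
      | base => exact subset_rfl
      | succ j hkj ih => exact subset_trans (hg j).2.2.1 ih
    have hx' : (⋂ k, Set.Icc (g k).a (g k).b).Nonempty :=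
      IsCompact.nonempty_iInter_of_sequence_nonempty_isCompact_isClosed _
        (fun k => (hg k).2.1) (fun k => Set.nonempty_Icc.2 (g k).hab.le)
        isClosed_Icc.isCompact (fun k => isClosed_Icc)
    have hy' : (⋂ k, Set.Icc (g k).c (g k).d).Nonempty :=
      IsCompact.nonempty_iInter_of_sequence_nonempty_isCompact_isClosed _
        (fun k => (hg k).2.2.1) (fun k => Set.nonempty_Icc.2 (g k).hcd.le)
        isClosed_Icc.isCompact (fun k => isClosed_Icc)
    obtain ⟨x', hx'mem⟩ := hx'
    obtain ⟨y', hy'mem⟩ := hy'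
    have hx'k : ∀ k, x' ∈ Set.Icc (g k).a (g k).b := Set.mem_iInter.1 hx'mem
    have hy'k : ∀ k, y' ∈ Set.Icc (g k).c (g k).d := Set.mem_iInter.1 hy'mem
    have hnk : ∀ k, k ≤ (g k).n := by
      intro k
      induction k with
      | zero => exact Nat.zero_le _
      | succ k ih => exact Nat.succ_le_of_lt (lt_of_le_of_lt ih (hg k).1)
    refine ⟨(x', y'), ?_, ?_⟩
    · rw [Metric.mem_ball, Prod.dist_eq]
      exact max_lt (hball₁ x' (hx'k 0)) (hball₂ y' (hy'k 0))
    · show liminf (fun n => dist (f^[n] x') (f^[n] y')) atTop = 0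
      refine aux_liminf_eq_zero _ (fun n => dist_nonneg) (fun n => aux_dist_le_one _ _) ?_
      intro ε hε
      rw [frequently_atTop]
      intro N
      obtain ⟨M, hM⟩ := exists_nat_one_div_lt hε
      set k := max N M with hk
      refine ⟨(g (k+1)).n, ?_, ?_⟩
      · calc N ≤ k := le_max_left _ _
          _ ≤ (g k).n := hnk k
          _ ≤ (g (k+1)).n := le_of_lt (hg k).1
      · have hd := (hg k).2.2.2 x' (hx'k (k+1)) y' (hy'k (k+1))
        refine lt_of_lt_of_le hd (le_trans ?_ (le_of_lt hM))
        have hMk : ((M:ℝ)+1) ≤ ((k:ℝ)+1) := by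
          have : (M:ℝ) ≤ k := Nat.cast_le.2 (le_max_right N M)
          linarith
        exact one_div_le_one_div_of_le (by positivity) hMk
  · exact fun a b c d hab hcd => aux_interval f hf hres a b c d hab hcd
end

section
/- Let X be a compact metric space and f : X → X continuous. If the induced map f̄ on the hyperspace K(X) is densely chaotic, then X has no isolated points. -/
open Filter Metric TopologicalSpace

/-- If the induced map `f̄` on the hyperspace `K(X)` is densely chaotic, then `X` has no
isolated points. -/
theorem no_isolated_points_of_denselyChaotic_induced
    {X : Type*} [MetricSpace X] [CompactSpace X] (f : X → X) (hf : Continuous f)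
    (hdense : Dense {p : NonemptyCompacts X × NonemptyCompacts X |
      liminf (fun n => dist ((inducedMap f hf)^[n] p.1) ((inducedMap f hf)^[n] p.2)) atTop = 0 ∧
      0 < limsup (fun n => dist ((inducedMap f hf)^[n] p.1) ((inducedMap f hf)^[n] p.2)) atTop}) :
    ∀ x : X, (nhdsWithin x {x}ᶜ).NeBot := by
  intro x
  by_contra h
  rw [not_neBot] at h
  -- x is isolated: {x} is a neighborhood of x
  have hx : {x} ∈ nhds x := by
    have : ∅ ∈ nhdsWithin x {x}ᶜ := by rw [h]; exact Filter.mem_bot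
    rcases mem_nhdsWithin.1 this with ⟨U, hUo, hxU, hU⟩
    refine Filter.mem_of_superset (hUo.mem_nhds hxU) ?_
    intro y hy
    by_contra hy'
    exact hU ⟨hy, hy'⟩ 
  rcases Metric.mem_nhds_iff.1 hx with ⟨ε, hε, hball⟩
  set S : NonemptyCompacts X := ⟨⟨{x}, isCompact_singleton⟩, ⟨x, rfl⟩⟩
  -- any K with dist K S < ε equals S
  have key : ∀ K : NonemptyCompacts X, dist K S < ε → K = S := by
    intro K hK
    have hne : EMetric.hausdorffEdist (K : Set X) (S : Set X) ≠ ⊤ :=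
      Metric.hausdorffEdist_ne_top_of_nonempty_of_bounded K.nonempty S.nonempty
        K.isCompact.isBounded S.isCompact.isBounded
    ext y
    constructor
    · intro hy
      have h1 : Metric.infDist y (S : Set X) ≤ Metric.hausdorffDist (K : Set X) (S : Set X) :=
        Metric.infDist_le_hausdorffDist_of_mem hy hne
      rw [← NonemptyCompacts.dist_eq] at h1
      have h2 : Metric.infDist y (S : Set X) = dist y x := by
        change Metric.infDist y ({x} : Set X) = dist y x
        simp [Metric.infDist_singleton]
      have : dist y x < ε := by rw [← h2]; exact lt_of_le_of_lt h1 hK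
      exact hball this
    · intro hy
      have hy' : y = x := hy
      rcases K.nonempty with ⟨z, hz⟩
      have h1 : Metric.infDist z (S : Set X) ≤ Metric.hausdorffDist (K : Set X) (S : Set X) :=
        Metric.infDist_le_hausdorffDist_of_mem hz hne
      rw [← NonemptyCompacts.dist_eq] at h1
      have h2 : Metric.infDist z (S : Set X) = dist z x := by
        change Metric.infDist z ({x} : Set X) = dist z x
        simp [Metric.infDist_singleton]
      have : dist z x < ε := by rw [← h2]; exact lt_of_le_of_lt h1 hK
      have hzx : z = x := hball this
      rw [hy', ← hzx]; exact hz
  -- the open set of pairs near (S, S)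
  have hopen : IsOpen {p : NonemptyCompacts X × NonemptyCompacts X |
      dist p.1 S < ε ∧ dist p.2 S < ε} := by
    have : Continuous fun p : NonemptyCompacts X × NonemptyCompacts X =>
        (dist p.1 S, dist p.2 S) := by fun_prop
    exact (isOpen_Iio.prod isOpen_Iio).preimage this
  have hne : Set.Nonempty {p : NonemptyCompacts X × NonemptyCompacts X |
      dist p.1 S < ε ∧ dist p.2 S < ε} :=
    ⟨(S, S), by simpa using hε⟩
  rcases hdense.inter_open_nonempty _ hopen hne with ⟨⟨K, L⟩, ⟨hK, hL⟩, hliminf, hlimsup⟩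
  have hKS : K = S := key K hK
  have hLS : L = S := key L hL
  subst hKS; subst hLS
  simp only [dist_self] at hlimsup
  rw [limsup_const (0 : ℝ)] at hlimsup
  exact lt_irrefl _ hlimsup
end
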